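/- If u ∈ H¹(0,1) with u(0)=0, and a,d : [0,1] → ℝ are continuous, vanish at 0, are positive on (0,1], and x ↦ x^{K₁}/a(x), x ↦ x^{K₂}/d(x) are nondecreasing near 0 with K₁+K₂ < 2, then lim_{x→0⁺} x u(x)²/(a(x)d(x)) = 0. -/

import Mathlib

open Set MeasureTheory Filter

/-- if `u ∈ H¹(0,1)` with `u 0 = 0`, and `a, d` are continuous,
vanish at `0`, positive on `(0,1]`, with `x ↦ x^K₁/a x` and `x ↦ x^K₂/d x`
nondecreasing near `0` and `K₁ + K₂ < 2`, then
`lim_{x→0⁺} x * u(x)² / (a(x) d(x)) = 0`. -/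
theorem statement6 (a d u u' : ℝ → ℝ) (K₁ K₂ : ℝ)
    (ha_cont : ContinuousOn a (Icc 0 1)) (hd_cont : ContinuousOn d (Icc 0 1))
    (ha0 : a 0 = 0) (hd0 : d 0 = 0)
    (ha_pos : ∀ x ∈ Ioc (0:ℝ) 1, 0 < a x)
    (hd_pos : ∀ x ∈ Ioc (0:ℝ) 1, 0 < d x)
    (hK₁ : K₁ ∈ Ioo (0:ℝ) 2) (hK₂ : K₂ ∈ Ioo (0:ℝ) 2)
    (hsum : K₁ + K₂ < 2)
    (hmona : ∃ δ > 0, MonotoneOn (fun x : ℝ => x ^ K₁ / a x) (Ioo (0:ℝ) δ))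
    (hmond : ∃ δ > 0, MonotoneOn (fun x : ℝ => x ^ K₂ / d x) (Ioo (0:ℝ) δ))
    (hu : ∀ x ∈ Ioo (0:ℝ) 1, HasDerivAt u (u' x) x)
    (hu_cont : ContinuousOn u (Icc 0 1))
    (hu0 : u 0 = 0)
    (hu' : IntegrableOn (fun x => u' x ^ 2) (Ioo 0 1)) :
    Tendsto (fun x : ℝ => x * u x ^ 2 / (a x * d x))
      (nhdsWithin 0 (Ioi 0)) (nhds 0) := by
  obtain ⟨δa, hδa, hma⟩ := hmona
  obtain ⟨δd, hδd, hmd⟩ := hmond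
  -- measurability and integrability of u'
  have hmeas : AEStronglyMeasurable u' (volume.restrict (Ioo (0:ℝ) 1)) := by
    refine (measurable_deriv u).aestronglyMeasurable.congr ?_
    refine (ae_restrict_iff' measurableSet_Ioo).2 (ae_of_all _ fun x hx => ?_)
    exact (hu x hx).deriv
  have hint : IntegrableOn u' (Ioo (0:ℝ) 1) := by
    refine Integrable.mono' (((integrable_const (1:ℝ)).add hu').div_const 2) hmeas
      (ae_of_all _ fun x => ?_)
    have h := sq_nonneg (|u' x| - 1)
    have h2 := sq_abs (u' x)
    simp only [Pi.add_apply, Real.norm_eq_abs]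
    nlinarith [abs_nonneg (u' x)]
  set M : ℝ := ∫ x in Ioo (0:ℝ) 1, u' x ^ 2 with hMdef
  have hM : 0 ≤ M := setIntegral_nonneg measurableSet_Ioo fun x _ => sq_nonneg _
  -- key pointwise bound from FTC + Cauchy–Schwarz
  have key : ∀ x ∈ Ioo (0:ℝ) 1, u x ^ 2 ≤ x * M := by
    intro x hx
    obtain ⟨hx0, hx1⟩ := hx
    have hsub : Ioc (0:ℝ) x ⊆ Ioo 0 1 := fun t ht => ⟨ht.1, lt_of_le_of_lt ht.2 hx1⟩
    have hintx : IntegrableOn u' (Ioc (0:ℝ) x) := hint.mono_set hsub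
    have hFTC : ∫ t in (0:ℝ)..x, u' t = u x - u 0 :=
      intervalIntegral.integral_eq_sub_of_hasDeriv_right_of_le hx0.le
        (hu_cont.mono (Icc_subset_Icc le_rfl hx1.le))
        (fun t ht => (hu t ⟨ht.1, ht.2.trans hx1⟩).hasDerivWithinAt)
        (intervalIntegrable_iff.2 (by rwa [uIoc_of_le hx0.le]))
    have hux : u x = ∫ t in Ioc (0:ℝ) x, u' t := by
      rw [hu0, sub_zero] at hFTC
      rw [← hFTC, intervalIntegral.integral_of_le hx0.le]
    set μ := volume.restrict (Ioc (0:ℝ) x) with hμ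
    haveI : IsFiniteMeasure μ := by
      constructor
      rw [hμ, Measure.restrict_apply_univ, Real.volume_Ioc]
      exact ENNReal.ofReal_lt_top
    have hfm : AEStronglyMeasurable (fun t => |u' t|) μ := hintx.abs.aestronglyMeasurable
    have hsq : Integrable (fun t => |u' t| ^ 2) μ := by
      have : Integrable (fun t => u' t ^ 2) μ := hu'.mono_set hsub
      exact this.congr (ae_of_all _ fun t => (sq_abs (u' t)).symm)
    have hfmem : MemLp (fun t => |u' t|) (ENNReal.ofReal 2) μ := by
      rw [show ENNReal.ofReal (2:ℝ) = 2 by norm_num [ENNReal.ofReal_ofNat]]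
      exact (memLp_two_iff_integrable_sq hfm).2 hsq
    have hgmem : MemLp (fun _ : ℝ => (1:ℝ)) (ENNReal.ofReal 2) μ := memLp_const 1
    have hpq : Real.HolderConjugate 2 2 := ⟨by norm_num, by norm_num, by norm_num⟩
    have hH := integral_mul_le_Lp_mul_Lq_of_nonneg hpq
      (ae_of_all _ fun t => abs_nonneg (u' t)) (ae_of_all _ fun _ => zero_le_one)
      hfmem hgmem
    simp only [mul_one, Real.one_rpow, Real.rpow_two, one_pow, sq_abs] at hH
    have hμ1 : ∫ _t, (1:ℝ) ∂μ = x := by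
      rw [integral_const, smul_eq_mul, mul_one, hμ, measureReal_def, Measure.restrict_apply_univ,
        Real.volume_Ioc, ENNReal.toReal_ofReal (by linarith)]
      ring
    rw [hμ1] at hH
    set A : ℝ := ∫ t, u' t ^ 2 ∂μ with hAdef
    have hA : 0 ≤ A := integral_nonneg fun t => sq_nonneg _
    have hAM : A ≤ M := by
      refine setIntegral_mono_set hu' (ae_of_all _ fun t => sq_nonneg _) ?_
      exact HasSubset.Subset.eventuallyLE hsub
    have habs : |u x| ≤ A ^ ((1:ℝ)/2) * x ^ ((1:ℝ)/2) := by
      rw [hux]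
      calc |∫ t, u' t ∂μ| ≤ ∫ t, |u' t| ∂μ := by
            simpa [Real.norm_eq_abs] using norm_integral_le_integral_norm (μ := μ) u'
        _ ≤ A ^ ((1:ℝ)/2) * x ^ ((1:ℝ)/2) := hH
    have hBsq : (A ^ ((1:ℝ)/2) * x ^ ((1:ℝ)/2)) ^ 2 = A * x := by
      rw [mul_pow, ← Real.rpow_natCast (A ^ ((1:ℝ)/2)) 2, ← Real.rpow_natCast (x ^ ((1:ℝ)/2)) 2,
        ← Real.rpow_mul hA, ← Real.rpow_mul hx0.le]
      norm_num
    calc u x ^ 2 = |u x| ^ 2 := (sq_abs _).symm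
      _ ≤ (A ^ ((1:ℝ)/2) * x ^ ((1:ℝ)/2)) ^ 2 := by
          exact pow_le_pow_left₀ (abs_nonneg _) habs 2
      _ = A * x := hBsq
      _ ≤ M * x := by nlinarith
      _ = x * M := mul_comm _ _
  -- choose a small threshold x₀
  set m : ℝ := min (min δa δd) 1 with hmdef
  have hm : 0 < m := lt_min (lt_min hδa hδd) one_pos
  set x₀ : ℝ := m / 2 with hx₀def
  have hx₀pos : 0 < x₀ := by positivity
  have hx₀m : x₀ < m := half_lt_self hm
  have hx₀a : x₀ < δa := hx₀m.trans_le ((min_le_left _ _).trans (min_le_left _ _))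
  have hx₀d : x₀ < δd := hx₀m.trans_le ((min_le_left _ _).trans (min_le_right _ _))
  have hx₀1 : x₀ < 1 := hx₀m.trans_le (min_le_right _ _)
  have hax₀ : 0 < a x₀ := ha_pos x₀ ⟨hx₀pos, hx₀1.le⟩
  have hdx₀ : 0 < d x₀ := hd_pos x₀ ⟨hx₀pos, hx₀1.le⟩
  set C₁ : ℝ := x₀ ^ K₁ / a x₀ with hC₁def
  set C₂ : ℝ := x₀ ^ K₂ / d x₀ with hC₂def
  have hC₁ : 0 < C₁ := div_pos (Real.rpow_pos_of_pos hx₀pos _) hax₀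
  have hC₂ : 0 < C₂ := div_pos (Real.rpow_pos_of_pos hx₀pos _) hdx₀
  have hp : 0 < 2 - (K₁ + K₂) := by linarith
  -- the majorant tends to 0
  have hg : Tendsto (fun x : ℝ => C₁ * C₂ * M * x ^ (2 - (K₁ + K₂)))
      (nhdsWithin 0 (Ioi 0)) (nhds 0) := by
    have h1 : Tendsto (fun x : ℝ => x ^ (2 - (K₁ + K₂))) (nhds 0) (nhds 0) := by
      have := (Real.continuousAt_rpow_const 0 (2 - (K₁ + K₂)) (Or.inr hp.le)).tendsto
      rwa [Real.zero_rpow hp.ne'] at this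
    have h2 : Tendsto (fun x : ℝ => C₁ * C₂ * M * x ^ (2 - (K₁ + K₂))) (nhds 0)
        (nhds (C₁ * C₂ * M * 0)) := h1.const_mul (C₁ * C₂ * M)
    rw [mul_zero] at h2
    exact h2.mono_left nhdsWithin_le_nhds
  refine squeeze_zero' ?_ ?_ hg
  · filter_upwards [Ioo_mem_nhdsGT_of_mem ⟨le_refl (0:ℝ), hx₀pos⟩] with x hx
    have hx1 : x ∈ Ioc (0:ℝ) 1 := ⟨hx.1, (hx.2.trans hx₀1).le⟩
    exact div_nonneg (mul_nonneg hx.1.le (sq_nonneg _))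
      (mul_nonneg (ha_pos x hx1).le (hd_pos x hx1).le)
  · filter_upwards [Ioo_mem_nhdsGT_of_mem ⟨le_refl (0:ℝ), hx₀pos⟩] with x hx
    obtain ⟨hxpos, hxlt⟩ := hx
    have hx1 : x < 1 := hxlt.trans hx₀1
    have hxIoc : x ∈ Ioc (0:ℝ) 1 := ⟨hxpos, hx1.le⟩
    have hax : 0 < a x := ha_pos x hxIoc
    have hdx : 0 < d x := hd_pos x hxIoc
    have ha_lb : x ^ K₁ ≤ C₁ * a x := by
      have h := hma ⟨hxpos, hxlt.trans hx₀a⟩ ⟨hx₀pos, hx₀a⟩ hxlt.le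
      calc x ^ K₁ = x ^ K₁ / a x * a x := by field_simp
        _ ≤ C₁ * a x := by exact mul_le_mul_of_nonneg_right h hax.le
    have hd_lb : x ^ K₂ ≤ C₂ * d x := by
      have h := hmd ⟨hxpos, hxlt.trans hx₀d⟩ ⟨hx₀pos, hx₀d⟩ hxlt.le
      calc x ^ K₂ = x ^ K₂ / d x * d x := by field_simp
        _ ≤ C₂ * d x := by exact mul_le_mul_of_nonneg_right h hdx.le
    have hden_pos : 0 < x ^ (K₁ + K₂) / (C₁ * C₂) := by
      exact div_pos (Real.rpow_pos_of_pos hxpos _) (mul_pos hC₁ hC₂)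
    have hden_le : x ^ (K₁ + K₂) / (C₁ * C₂) ≤ a x * d x := by
      rw [div_le_iff₀ (mul_pos hC₁ hC₂), Real.rpow_add hxpos]
      calc x ^ K₁ * x ^ K₂ ≤ (C₁ * a x) * (C₂ * d x) :=
            mul_le_mul ha_lb hd_lb (Real.rpow_pos_of_pos hxpos _).le
              (by positivity)
        _ = a x * d x * (C₁ * C₂) := by ring
    have hnum : x * u x ^ 2 ≤ x * (x * M) :=
      mul_le_mul_of_nonneg_left (key x ⟨hxpos, hx1⟩) hxpos.le
    calc x * u x ^ 2 / (a x * d x)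
        ≤ x * (x * M) / (x ^ (K₁ + K₂) / (C₁ * C₂)) :=
          div_le_div₀ (by positivity) hnum hden_pos hden_le
      _ = C₁ * C₂ * M * x ^ (2 - (K₁ + K₂)) := by
          rw [Real.rpow_sub hxpos, Real.rpow_two]
          have hne : x ^ (K₁ + K₂) ≠ 0 := (Real.rpow_pos_of_pos hxpos _).ne'
          field_simp
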